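/- arXiv:2605.19805 — 2 statements merged into one kernel-verified Lean document; each statement's English description precedes it below -/
import Mathlib

section
/- Let A be a real n×n matrix and κ a real symmetric positive definite n×n matrix such that Aᵀκ + κA is negative definite (xᵀ(Aᵀκ + κA)x < 0 for all nonzero real x). Then every complex eigenvalue of A has strictly negative real part: if μ ∈ ℂ and v ∈ ℂⁿ is nonzero with (the complexification of) A applied to v equal to μv, then Re(μ) < 0. -/
open Matrix

/-- Real part of the complexified quadratic form. -/
lemma re_dot_aux {n : ℕ} (B : Matrix (Fin n) (Fin n) ℝ) (v : Fin n → ℂ) :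
    (star v ⬝ᵥ (B.map (Complex.ofReal)).mulVec v).re =
      (fun i => (v i).re) ⬝ᵥ B.mulVec (fun i => (v i).re)
        + (fun i => (v i).im) ⬝ᵥ B.mulVec (fun i => (v i).im) := by
  simp only [dotProduct, mulVec, Pi.star_apply, Matrix.map_apply, Finset.mul_sum,
    Finset.sum_mul, Complex.re_sum]
  rw [← Finset.sum_add_distrib]
  refine Finset.sum_congr rfl fun i _ => ?_
  rw [← Finset.sum_add_distrib]
  refine Finset.sum_congr rfl fun j _ => ?_
  simp [Complex.mul_re, Complex.mul_im]

lemma map_mulVec_star {n : ℕ} (A : Matrix (Fin n) (Fin n) ℝ) (v : Fin n → ℂ) :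
    (A.map (Complex.ofReal)).mulVec (star v) = star ((A.map (Complex.ofReal)).mulVec v) := by
  funext i
  simp [mulVec, dotProduct, Matrix.map_apply, mul_comm]

/-- If `κ` is symmetric positive definite and `Aᵀκ + κA` is negative definite, then every
complex eigenvalue of the real matrix `A` has strictly negative real part (`A` is Hurwitz). -/
theorem hurwitz_of_lyapunov {n : ℕ}
    (A κ : Matrix (Fin n) (Fin n) ℝ)
    (hκsymm : κᵀ = κ)
    (hκpd : ∀ v : Fin n → ℝ, v ≠ 0 → 0 < v ⬝ᵥ κ.mulVec v)
    (hneg : ∀ x : Fin n → ℝ, x ≠ 0 → x ⬝ᵥ (Aᵀ * κ + κ * A).mulVec x < 0)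
    (μ : ℂ) (v : Fin n → ℂ) (hv : v ≠ 0)
    (heig : (A.map (Complex.ofReal)).mulVec v = μ • v) :
    μ.re < 0 := by
  set x : Fin n → ℝ := fun i => (v i).re with hx
  set y : Fin n → ℝ := fun i => (v i).im with hy
  set c : ℂ := star v ⬝ᵥ (κ.map (Complex.ofReal)).mulVec v with hc
  -- nonneg / nonpos helpers
  have hκnn : ∀ w : Fin n → ℝ, 0 ≤ w ⬝ᵥ κ.mulVec w := by
    intro w
    by_cases hw : w = 0
    · simp [hw]
    · exact (hκpd w hw).le
  have hMnp : ∀ w : Fin n → ℝ, w ⬝ᵥ (Aᵀ * κ + κ * A).mulVec w ≤ 0 := by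
    intro w
    by_cases hw : w = 0
    · simp [hw]
    · exact (hneg w hw).le
  have hxy : x ≠ 0 ∨ y ≠ 0 := by
    by_contra h
    push_neg at h
    apply hv
    funext i
    have h1 : x i = 0 := by rw [h.1]; rfl
    have h2 : y i = 0 := by rw [h.2]; rfl
    exact Complex.ext h1 h2
  have hs : 0 < x ⬝ᵥ κ.mulVec x + y ⬝ᵥ κ.mulVec y := by
    rcases hxy with h | h
    · have := hκpd x h
      have := hκnn y
      linarith
    · have := hκpd y h
      have := hκnn x
      linarith
  have ht : x ⬝ᵥ (Aᵀ * κ + κ * A).mulVec x + y ⬝ᵥ (Aᵀ * κ + κ * A).mulVec y < 0 := by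
    rcases hxy with h | h
    · have := hneg x h
      have := hMnp y
      linarith
    · have := hneg y h
      have := hMnp x
      linarith
  -- the key complex identity
  have key : star v ⬝ᵥ ((Aᵀ * κ + κ * A).map (Complex.ofReal)).mulVec v
      = ((starRingEnd ℂ) μ + μ) * c := by
    have hmap : (Aᵀ * κ + κ * A).map (Complex.ofReal)
        = (Aᵀ.map Complex.ofReal) * (κ.map Complex.ofReal)
          + (κ.map Complex.ofReal) * (A.map Complex.ofReal) := by
      ext i j
      simp [Matrix.mul_apply, Matrix.map_apply, Matrix.add_apply]
    rw [hmap, Matrix.add_mulVec, dotProduct_add]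
    have h1 : star v ⬝ᵥ ((Aᵀ.map Complex.ofReal) * (κ.map Complex.ofReal)).mulVec v
        = (starRingEnd ℂ) μ * c := by
      rw [← Matrix.mulVec_mulVec, Matrix.dotProduct_mulVec]
      have htr : Aᵀ.map Complex.ofReal = (A.map Complex.ofReal)ᵀ := by
        simp [Matrix.transpose_map]
      rw [htr, Matrix.vecMul_transpose, map_mulVec_star, heig, star_smul]
      simp [smul_dotProduct, smul_eq_mul, Complex.star_def, hc]
    have h2 : star v ⬝ᵥ ((κ.map Complex.ofReal) * (A.map Complex.ofReal)).mulVec v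
        = μ * c := by
      rw [← Matrix.mulVec_mulVec, heig, Matrix.mulVec_smul, dotProduct_smul, smul_eq_mul, hc]
    rw [h1, h2]
    ring
  -- take real parts
  have hre := congrArg Complex.re key
  rw [re_dot_aux] at hre
  have hcre : c.re = x ⬝ᵥ κ.mulVec x + y ⬝ᵥ κ.mulVec y := re_dot_aux κ v
  have hrhs : (((starRingEnd ℂ) μ + μ) * c).re = 2 * μ.re * c.re := by
    have : (starRingEnd ℂ) μ + μ = ((2 * μ.re : ℝ) : ℂ) := by
      rw [add_comm, Complex.add_conj]
    rw [this]
    simp [Complex.mul_re]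
  rw [hrhs, hcre] at hre
  nlinarith [hre, hs, ht]
end

section
/- Let J, R, κ be real n×n matrices with J skew-symmetric, κ symmetric positive definite, and R positive definite in the sense that vᵀRv > 0 for every nonzero v. Then A := (J − R)κ is Hurwitz: every complex eigenvalue μ of A (i.e., every μ ∈ ℂ for which there is a nonzero v ∈ ℂⁿ with the complexification of A sending v to μv) satisfies Re(μ) < 0. -/
open Matrix

private lemma quad_re {n : ℕ} (M : Matrix (Fin n) (Fin n) ℝ) (w : Fin n → ℂ) :
    (star w ⬝ᵥ (M.map Complex.ofReal).mulVec w).re =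
      (fun i => (w i).re) ⬝ᵥ M.mulVec (fun i => (w i).re) +
      (fun i => (w i).im) ⬝ᵥ M.mulVec (fun i => (w i).im) := by
  simp only [dotProduct, mulVec, Pi.star_apply, map_apply, Finset.mul_sum,
    Complex.re_sum, Finset.sum_mul]
  rw [← Finset.sum_add_distrib]
  refine Finset.sum_congr rfl fun i _ => ?_
  rw [← Finset.sum_add_distrib]
  refine Finset.sum_congr rfl fun j _ => ?_
  simp [Complex.mul_re]

private lemma quad_im {n : ℕ} (M : Matrix (Fin n) (Fin n) ℝ) (w : Fin n → ℂ) :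
    (star w ⬝ᵥ (M.map Complex.ofReal).mulVec w).im =
      (fun i => (w i).re) ⬝ᵥ M.mulVec (fun i => (w i).im) -
      (fun i => (w i).im) ⬝ᵥ M.mulVec (fun i => (w i).re) := by
  simp only [dotProduct, mulVec, Pi.star_apply, map_apply, Finset.mul_sum,
    Complex.im_sum, Finset.sum_mul]
  rw [← Finset.sum_sub_distrib]
  refine Finset.sum_congr rfl fun i _ => ?_
  rw [← Finset.sum_sub_distrib]
  refine Finset.sum_congr rfl fun j _ => ?_
  simp [Complex.mul_im]
  ring

private lemma symm_swap {n : ℕ} (κ : Matrix (Fin n) (Fin n) ℝ) (h : κᵀ = κ)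
    (x y : Fin n → ℝ) : x ⬝ᵥ κ.mulVec y = y ⬝ᵥ κ.mulVec x := by
  rw [dotProduct_mulVec, ← mulVec_transpose, h, dotProduct_comm]

private lemma skew_zero {n : ℕ} (J : Matrix (Fin n) (Fin n) ℝ) (h : Jᵀ = -J)
    (x : Fin n → ℝ) : x ⬝ᵥ J.mulVec x = 0 := by
  have h1 : x ⬝ᵥ J.mulVec x = -(x ⬝ᵥ J.mulVec x) := by
    conv_lhs => rw [dotProduct_mulVec, ← mulVec_transpose, h, dotProduct_comm]
    simp [neg_mulVec]
  linarith

private lemma pd_sum {n : ℕ} (R : Matrix (Fin n) (Fin n) ℝ)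
    (hR : ∀ v : Fin n → ℝ, v ≠ 0 → 0 < v ⬝ᵥ R.mulVec v)
    (a b : Fin n → ℝ) (hab : ¬(a = 0 ∧ b = 0)) :
    0 < a ⬝ᵥ R.mulVec a + b ⬝ᵥ R.mulVec b := by
  by_cases ha : a = 0
  · have hb : b ≠ 0 := fun hb => hab ⟨ha, hb⟩
    have := hR b hb
    simp [ha]; linarith
  · by_cases hb : b = 0
    · have := hR a ha
      simp [hb]; linarith
    · have := hR a ha; have := hR b hb; linarith

/-- With `J` skew-symmetric, `κ` symmetric positive definite, and `R` positive definite,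
the matrix `A := (J - R) κ` is Hurwitz: every complex eigenvalue of `A` has negative real
part. -/
theorem hurwitz_of_port_hamiltonian_jacobian {n : ℕ}
    (J R κ : Matrix (Fin n) (Fin n) ℝ)
    (hJ : Jᵀ = -J)
    (hκsymm : κᵀ = κ)
    (hκpd : ∀ v : Fin n → ℝ, v ≠ 0 → 0 < v ⬝ᵥ κ.mulVec v)
    (hR : ∀ v : Fin n → ℝ, v ≠ 0 → 0 < v ⬝ᵥ R.mulVec v)
    (A : Matrix (Fin n) (Fin n) ℝ) (hA : A = (J - R) * κ)
    (μ : ℂ) (v : Fin n → ℂ) (hv : v ≠ 0)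
    (heig : (A.map (Complex.ofReal)).mulVec v = μ • v) :
    μ.re < 0 := by
  set w : Fin n → ℂ := (κ.map Complex.ofReal).mulVec v with hw
  have hmap : (A.map Complex.ofReal) =
      ((J - R).map Complex.ofReal) * (κ.map Complex.ofReal) := by
    rw [hA]; ext i j; simp [Matrix.mul_apply]
  have hAv : ((J - R).map Complex.ofReal).mulVec w = μ • v := by
    rw [hw, mulVec_mulVec, ← hmap, heig]
  -- the quantity c = star v ⬝ᵥ κ v : positive real part, zero imaginary part
  have hcre : 0 < (star v ⬝ᵥ (κ.map Complex.ofReal).mulVec v).re := by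
    rw [quad_re]
    refine pd_sum κ hκpd _ _ ?_
    rintro ⟨h1, h2⟩
    apply hv
    funext i
    have e1 := congrFun h1 i
    have e2 := congrFun h2 i
    simp at e1 e2
    exact Complex.ext e1 e2
  have hcim : (star v ⬝ᵥ (κ.map Complex.ofReal).mulVec v).im = 0 := by
    rw [quad_im, symm_swap κ hκsymm, sub_self]
  -- the eigenvalue identity dotted with star w
  have key : star w ⬝ᵥ ((J - R).map Complex.ofReal).mulVec w = μ * (star w ⬝ᵥ v) := by
    rw [hAv, dotProduct_smul, smul_eq_mul]
  -- star w ⬝ᵥ v is the conjugate of star v ⬝ᵥ w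
  have hconj : star w ⬝ᵥ v = star (star v ⬝ᵥ w) := by
    simp [dotProduct, Finset.sum_comm, mul_comm]
  have hc_re : 0 < (star w ⬝ᵥ v).re := by
    rw [hconj]; simpa using hcre
  have hc_im : (star w ⬝ᵥ v).im = 0 := by
    rw [hconj]; simpa using hcim
  -- real part of the left side is negative
  have hwne : ¬((fun i => (w i).re) = 0 ∧ (fun i => (w i).im) = 0) := by
    rintro ⟨h1, h2⟩
    have hw0 : w = 0 := by
      funext i
      have e1 := congrFun h1 i
      have e2 := congrFun h2 i
      simp at e1 e2
      exact Complex.ext e1 e2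
    rw [hw0] at hc_re
    simp at hc_re
  have hlhs : (star w ⬝ᵥ ((J - R).map Complex.ofReal).mulVec w).re < 0 := by
    rw [quad_re]
    simp only [sub_mulVec, dotProduct_sub, skew_zero J hJ, zero_sub]
    have := pd_sum R hR (fun i => (w i).re) (fun i => (w i).im) hwne
    linarith
  rw [key] at hlhs
  rw [Complex.mul_re, hc_im, mul_zero, sub_zero] at hlhs
  nlinarith
end
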